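/- Let N ≥ 3 be an integer, c₁, c₂ ∈ ℝ, h : I → ℝ a function on an open interval I, and let σ₁, σ₂ : I → ℝ be differentiable and strictly positive functions satisfying σ_i′(t) = −N · (σ_i(t)²)^{1−1/N} · c_i · h(t) for i = 1, 2 and all t ∈ I. Then the quantity t ↦ c₂ · σ₁(t)^{−(N−2)/N} − c₁ · σ₂(t)^{−(N−2)/N} is constant on I. (Consequently, for a depth-N factorization with N ≥ 3 and stationary singular vectors, each singular value is determined by any other up to an additive constant in the coordinates σ ↦ σ^{−(N−2)/N}.) -/

import Mathlib

/-- Conserved quantity for depth `N ≥ 3`: if two strictly positive singular values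
evolve by `σᵢ′(t) = −N·(σᵢ(t)²)^(1−1/N)·cᵢ·h(t)` on an open interval `I`, then
`c₂·σ₁(t)^(−(N−2)/N) − c₁·σ₂(t)^(−(N−2)/N)` is constant on `I`. -/
theorem stmt15 (N : ℕ) (hN : 3 ≤ N) (c₁ c₂ : ℝ)
    (I : Set ℝ) (hI_open : IsOpen I) (hI_conn : I.OrdConnected)
    (h : ℝ → ℝ) (σ₁ σ₂ : ℝ → ℝ)
    (hpos₁ : ∀ t ∈ I, 0 < σ₁ t) (hpos₂ : ∀ t ∈ I, 0 < σ₂ t)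
    (hd₁ : ∀ t ∈ I, HasDerivAt σ₁
      (-(N : ℝ) * (σ₁ t ^ 2) ^ (1 - 1 / (N : ℝ)) * (c₁ * h t)) t)
    (hd₂ : ∀ t ∈ I, HasDerivAt σ₂
      (-(N : ℝ) * (σ₂ t ^ 2) ^ (1 - 1 / (N : ℝ)) * (c₂ * h t)) t) :
    ∀ t ∈ I, ∀ t' ∈ I,
      c₂ * σ₁ t ^ (-(((N : ℝ) - 2) / N)) - c₁ * σ₂ t ^ (-(((N : ℝ) - 2) / N)) =
      c₂ * σ₁ t' ^ (-(((N : ℝ) - 2) / N)) - c₁ * σ₂ t' ^ (-(((N : ℝ) - 2) / N)) := by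
  have hN0 : (N : ℝ) ≠ 0 := by
    have : (3:ℝ) ≤ (N:ℝ) := by exact_mod_cast hN
    linarith
  set p : ℝ := ((N : ℝ) - 2) / N with hp
  have key : ∀ (σ : ℝ → ℝ) (c : ℝ), (∀ t ∈ I, 0 < σ t) →
      (∀ t ∈ I, HasDerivAt σ (-(N : ℝ) * (σ t ^ 2) ^ (1 - 1 / (N : ℝ)) * (c * h t)) t) →
      ∀ t ∈ I, HasDerivAt (fun s => σ s ^ (-p)) (((N : ℝ) - 2) * (c * h t)) t := by
    intro σ c hpos hd t ht
    have hσ := hpos t ht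
    have h1 := (hd t ht).rpow_const (p := -p) (Or.inl (ne_of_gt hσ))
    convert h1 using 1
    have hsq : ((σ t ^ 2 : ℝ)) ^ (1 - 1 / (N : ℝ)) = σ t ^ (2 * (1 - 1 / (N : ℝ))) := by
      rw [← Real.rpow_natCast (σ t) 2, ← Real.rpow_mul hσ.le]
      norm_num
    rw [hsq]
    have hre : -(N : ℝ) * σ t ^ (2 * (1 - 1 / (N : ℝ))) * (c * h t) * (-p) * σ t ^ (-p - 1)
        = (N : ℝ) * p * (c * h t) * (σ t ^ (2 * (1 - 1 / (N : ℝ))) * σ t ^ (-p - 1)) := by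
      ring
    rw [hre, ← Real.rpow_add hσ]
    have hexp : 2 * (1 - 1 / (N : ℝ)) + (-p - 1) = 0 := by
      rw [hp]; field_simp; ring
    rw [hexp, Real.rpow_zero, mul_one, hp]
    field_simp
  have hder : ∀ t ∈ I, HasDerivAt
      (fun s => c₂ * σ₁ s ^ (-p) - c₁ * σ₂ s ^ (-p)) 0 t := by
    intro t ht
    have h1 := ((key σ₁ c₁ hpos₁ hd₁ t ht).const_mul c₂).sub
      ((key σ₂ c₂ hpos₂ hd₂ t ht).const_mul c₁)
    exact h1.congr_deriv (by ring)
  intro t ht t' ht'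
  have hconv : Convex ℝ I := hI_conn.convex
  refine hconv.is_const_of_fderivWithin_eq_zero (f := fun s => c₂ * σ₁ s ^ (-p) - c₁ * σ₂ s ^ (-p))
    (fun x hx => ((hder x hx).differentiableAt).differentiableWithinAt) ?_ ht ht'
  intro x hx
  rw [fderivWithin_of_isOpen hI_open hx, (hder x hx).hasFDerivAt.fderiv]
  exact ContinuousLinearMap.ext fun y => by simp
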